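/- The series of functions Σₙ≥₀ [q₁,₂ₙ(z) + conj(q₁,₂ₙ₊₁(z))] converges uniformly on the closed disk {z ∈ ℂ : |z − z₁| ≤ ρ₁}. -/

import Mathlib

set_option maxHeartbeats 1000000


theorem series_uniform_convergence
    (z₁ z₂ : ℂ) (hz : z₁ ≠ z₂) (ρ ρ₁ ρ₂ : ℝ)
    (hρ : ρ = ‖z₁ - z₂‖)
    (hρ₁ : 0 < ρ₁) (hρ₂ : 0 < ρ₂) (hsum : ρ₁ + ρ₂ < ρ)
    (Λ₁ Λ₂ Λ : ℝ) (hΛ₁ : Λ₁ = (ρ₁ / ρ) ^ 2) (hΛ₂ : Λ₂ = (ρ₂ / ρ) ^ 2)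
    (hΛ : Λ = (Λ₁ - Λ₂) ^ 2 + 1 - 2 * (Λ₁ + Λ₂))
    (l₁ l₂ : ℕ → ℝ) (hl₁0 : l₁ 0 = 1) (hl₂0 : l₂ 0 = 1)
    (hl₁ : ∀ n : ℕ, l₁ (n + 1) = 1 - Λ₂ / l₂ n)
    (hl₂ : ∀ n : ℕ, l₂ (n + 1) = 1 - Λ₁ / l₁ n)
    (κ₁ κ₂ : ℕ → ℂ)
    (hκ₁1 : κ₁ 1 = ((2 * ρ₂ ^ 2 : ℝ) : ℂ))
    (hκ₁2 : κ₁ 2 = -(2 * (((ρ₁ * ρ₂ : ℝ)) : ℂ) ^ 2) / (starRingEnd ℂ (z₂ - z₁)) ^ 2)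
    (hκ₁rec : ∀ n : ℕ, 1 ≤ n →
      κ₁ (n + 2) = ((Λ₁ * Λ₂ / (l₂ n * l₁ (n - 1)) ^ 2 : ℝ) : ℂ) * κ₁ n)
    (hκ₂1 : κ₂ 1 = ((2 * ρ₁ ^ 2 : ℝ) : ℂ))
    (hκ₂2 : κ₂ 2 = -(2 * (((ρ₁ * ρ₂ : ℝ)) : ℂ) ^ 2) / (starRingEnd ℂ (z₁ - z₂)) ^ 2)
    (hκ₂rec : ∀ n : ℕ, 1 ≤ n →
      κ₂ (n + 2) = ((Λ₁ * Λ₂ / (l₁ n * l₂ (n - 1)) ^ 2 : ℝ) : ℂ) * κ₂ n)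
    (z1s z2s : ℕ → ℂ)
    (hz1s : ∀ n : ℕ, z1s n = ((1 - l₂ n : ℝ) : ℂ) * z₂ + ((l₂ n : ℝ) : ℂ) * z₁)
    (hz2s : ∀ n : ℕ, z2s n = ((1 - l₁ n : ℝ) : ℂ) * z₁ + ((l₁ n : ℝ) : ℂ) * z₂)
    (α₁ : ℕ → ℂ)
    (hα₁ : ∀ n : ℕ, 1 ≤ n →
      α₁ n = -κ₁ n / (2 * ((l₁ (n - 1) : ℝ) : ℂ) * (z₁ - z₂)))
    (q₁ : ℕ → ℂ → ℂ)
    (hq₁0 : ∀ z : ℂ, q₁ 0 z = 2 * (z - z₁))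
    (hq₁ : ∀ n : ℕ, 1 ≤ n → ∀ z : ℂ, q₁ n z = κ₁ n / (z - z2s (n - 1)) + α₁ n)
    :
    ∃ g : ℂ → ℂ,
      TendstoUniformlyOn
        (fun N : ℕ => fun z : ℂ =>
          ∑ n ∈ Finset.range N, (q₁ (2 * n) z + starRingEnd ℂ (q₁ (2 * n + 1) z)))
        g Filter.atTop (Metric.closedBall z₁ ρ₁) := by
  have hρ0 : 0 < ρ := by linarith
  obtain ⟨a, ha_def⟩ : ∃ x : ℝ, x = ρ₁ / ρ := ⟨_, rfl⟩
  obtain ⟨b, hb_def⟩ : ∃ x : ℝ, x = ρ₂ / ρ := ⟨_, rfl⟩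
  have ha : 0 < a := ha_def ▸ div_pos hρ₁ hρ0
  have hb : 0 < b := hb_def ▸ div_pos hρ₂ hρ0
  have hab : a + b < 1 := by
    rw [ha_def, hb_def, ← add_div, div_lt_one hρ0]; exact hsum
  have ha1 : a < 1 := by linarith
  have hb1 : b < 1 := by linarith
  have hΛ₁' : Λ₁ = a ^ 2 := by rw [hΛ₁, ha_def]
  have hΛ₂' : Λ₂ = b ^ 2 := by rw [hΛ₂, hb_def]
  have hρa : ρ * a = ρ₁ := by rw [ha_def]; field_simp
  obtain ⟨S, hS0, hSsq⟩ :
      ∃ S : ℝ, 0 ≤ S ∧ S ^ 2 = (1 - a - b) * (1 + a + b) * ((1 - a + b) * (1 + a - b)) :=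
    ⟨Real.sqrt ((1 - a - b) * (1 + a + b) * ((1 - a + b) * (1 + a - b))),
      Real.sqrt_nonneg _, Real.sq_sqrt
        (mul_nonneg (mul_nonneg (by linarith) (by linarith))
          (mul_nonneg (by linarith) (by linarith)))⟩
  obtain ⟨c₁, hc₁_def⟩ : ∃ x : ℝ, x = ((1 + a ^ 2 - b ^ 2) + S) / 2 := ⟨_, rfl⟩
  obtain ⟨c₂, hc₂_def⟩ : ∃ x : ℝ, x = ((1 + b ^ 2 - a ^ 2) + S) / 2 := ⟨_, rfl⟩
  have ha2 : a ^ 2 < 1 := pow_lt_one₀ ha.le ha1 (by norm_num)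
  have hb2 : b ^ 2 < 1 := pow_lt_one₀ hb.le hb1 (by norm_num)
  have hc₁0 : 0 < c₁ := by rw [hc₁_def]; linarith [sq_nonneg a, hS0]
  have hc₂0 : 0 < c₂ := by rw [hc₂_def]; linarith [sq_nonneg b, hS0]
  have hc₁a : a < c₁ := by
    rw [hc₁_def]
    have hm := mul_pos (show (0:ℝ) < 1 - a - b by linarith)
      (show (0:ℝ) < 1 - a + b by linarith)
    have hexp : (1 - a - b) * (1 - a + b) = 1 - 2 * a + a ^ 2 - b ^ 2 := by ring
    linarith [hS0]
  have hc₁1 : c₁ ≤ 1 := by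
    have h1 : S ≤ 1 - a ^ 2 + b ^ 2 := by
      have hr0 : (0:ℝ) ≤ 1 - a ^ 2 + b ^ 2 := by linarith [sq_nonneg b]
      have hsq : S ^ 2 ≤ (1 - a ^ 2 + b ^ 2) ^ 2 := by
        rw [hSsq]; linarith [sq_nonneg b, sq_nonneg (1 - a ^ 2 + b ^ 2),
          show (1 - a ^ 2 + b ^ 2) ^ 2 - (1 - a - b) * (1 + a + b) * ((1 - a + b) * (1 + a - b))
            = 4 * b ^ 2 from by ring]
      exact abs_le_of_sq_le_sq' hsq hr0 |>.2
    rw [hc₁_def]; linarith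
  have hc₂1 : c₂ ≤ 1 := by
    have h1 : S ≤ 1 - b ^ 2 + a ^ 2 := by
      have hr0 : (0:ℝ) ≤ 1 - b ^ 2 + a ^ 2 := by linarith [sq_nonneg a]
      have hsq : S ^ 2 ≤ (1 - b ^ 2 + a ^ 2) ^ 2 := by
        rw [hSsq]; linarith [sq_nonneg a, sq_nonneg (1 - b ^ 2 + a ^ 2),
          show (1 - b ^ 2 + a ^ 2) ^ 2 - (1 - a - b) * (1 + a + b) * ((1 - a + b) * (1 + a - b))
            = 4 * a ^ 2 from by ring]
      exact abs_le_of_sq_le_sq' hsq hr0 |>.2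
    rw [hc₂_def]; linarith
  have hid1 : c₁ * c₂ = c₂ - b ^ 2 := by
    rw [hc₁_def, hc₂_def]; linear_combination hSsq / 4
  have hid2 : c₁ * c₂ = c₁ - a ^ 2 := by
    rw [hc₁_def, hc₂_def]; linear_combination hSsq / 4
  have hcc : a * b < c₁ * c₂ := by
    rw [hid1, hc₂_def]
    have hm := mul_pos (show (0:ℝ) < 1 - (a + b) by linarith)
      (show (0:ℝ) < 1 + (a + b) by linarith)
    have hexp : (1 - (a + b)) * (1 + (a + b)) = 1 - a ^ 2 - 2 * (a * b) - b ^ 2 := by ring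
    linarith [hS0]
  -- bounds on the sequences
  have hbounds : ∀ n, (c₁ ≤ l₁ n ∧ l₁ n ≤ 1) ∧ (c₂ ≤ l₂ n ∧ l₂ n ≤ 1) := by
    intro n
    induction n with
    | zero => rw [hl₁0, hl₂0]; exact ⟨⟨hc₁1, le_refl 1⟩, ⟨hc₂1, le_refl 1⟩⟩
    | succ n ih =>
      obtain ⟨⟨h1l, h1u⟩, h2l, h2u⟩ := ih
      have hl₂pos : 0 < l₂ n := lt_of_lt_of_le hc₂0 h2l
      have hl₁pos : 0 < l₁ n := lt_of_lt_of_le hc₁0 h1l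
      refine ⟨⟨?_, ?_⟩, ?_, ?_⟩
      · rw [hl₁ n, hΛ₂']
        have h3 : b ^ 2 / l₂ n ≤ 1 - c₁ := by
          rw [div_le_iff₀ hl₂pos]
          have hm := mul_nonneg (sub_nonneg.2 hc₁1) (sub_nonneg.2 h2l)
          have hexp : (1 - c₁) * (l₂ n - c₂)
              = (1 - c₁) * l₂ n - (c₂ - c₁ * c₂) := by ring
          linarith [hid1]
        linarith
      · rw [hl₁ n, hΛ₂']
        have h3 : 0 ≤ b ^ 2 / l₂ n := div_nonneg (sq_nonneg b) hl₂pos.le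
        linarith
      · rw [hl₂ n, hΛ₁']
        have h3 : a ^ 2 / l₁ n ≤ 1 - c₂ := by
          rw [div_le_iff₀ hl₁pos]
          have hm := mul_nonneg (sub_nonneg.2 hc₂1) (sub_nonneg.2 h1l)
          have hexp : (1 - c₂) * (l₁ n - c₁)
              = (1 - c₂) * l₁ n - (c₁ - c₁ * c₂) := by ring
          linarith [hid2]
        linarith
      · rw [hl₂ n, hΛ₁']
        have h3 : 0 ≤ a ^ 2 / l₁ n := div_nonneg (sq_nonneg a) hl₁pos.le
        linarith
  -- the contraction ratio
  obtain ⟨s, hs_def⟩ : ∃ x : ℝ, x = a * b / (c₁ * c₂) := ⟨_, rfl⟩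
  have hcc0 : 0 < c₁ * c₂ := mul_pos hc₁0 hc₂0
  have hs0 : 0 < s := hs_def ▸ div_pos (mul_pos ha hb) hcc0
  have hs1 : s < 1 := by rw [hs_def, div_lt_one hcc0]; exact hcc
  have hs_sq : s ^ 2 = a ^ 2 * b ^ 2 / (c₁ * c₂) ^ 2 := by
    rw [hs_def, div_pow, mul_pow]
  obtain ⟨K, hK_def⟩ : ∃ x : ℝ,
      x = max (‖κ₁ 1‖ / s) (‖κ₁ 2‖ / s ^ 2) := ⟨_, rfl⟩
  have hK0 : 0 ≤ K := by
    rw [hK_def]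
    exact le_trans (div_nonneg (norm_nonneg _) hs0.le) (le_max_left _ _)
  have hK1 : ‖κ₁ 1‖ ≤ K * s := by
    have h := le_max_left (‖κ₁ 1‖ / s) (‖κ₁ 2‖ / s ^ 2)
    rw [← hK_def, div_le_iff₀ hs0] at h
    exact h
  have hK2 : ‖κ₁ 2‖ ≤ K * s ^ 2 := by
    have h := le_max_right (‖κ₁ 1‖ / s) (‖κ₁ 2‖ / s ^ 2)
    rw [← hK_def, div_le_iff₀ (by positivity : (0:ℝ) < s ^ 2)] at h
    exact h
  -- geometric bound on κ₁
  have hκb : ∀ n, 1 ≤ n → ‖κ₁ n‖ ≤ K * s ^ n := by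
    intro n
    induction n using Nat.strong_induction_on with
    | _ n ih =>
      intro hn
      match n, hn with
      | 1, _ => rw [pow_one]; exact hK1
      | 2, _ => exact hK2
      | (m + 3), _ =>
        have hrec := hκ₁rec (m + 1) (by omega)
        have ihm := ih (m + 1) (by omega) (by omega)
        have hX : c₁ * c₂ ≤ l₂ (m + 1) * l₁ m := by
          calc c₁ * c₂ = c₂ * c₁ := mul_comm _ _
            _ ≤ l₂ (m + 1) * l₁ m :=
              mul_le_mul (hbounds (m + 1)).2.1 (hbounds m).1.1 hc₁0.le
                (le_trans hc₂0.le (hbounds (m + 1)).2.1)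
        have hXpos : 0 < l₂ (m + 1) * l₁ m := lt_of_lt_of_le hcc0 hX
        have hr0 : 0 ≤ Λ₁ * Λ₂ / (l₂ (m + 1) * l₁ m) ^ 2 := by
          rw [hΛ₁', hΛ₂']; positivity
        have hrs : Λ₁ * Λ₂ / (l₂ (m + 1) * l₁ m) ^ 2 ≤ s ^ 2 := by
          rw [hΛ₁', hΛ₂', hs_sq]
          have h1 : (c₁ * c₂) ^ 2 ≤ (l₂ (m + 1) * l₁ m) ^ 2 :=
            pow_le_pow_left₀ hcc0.le hX 2
          exact div_le_div_of_nonneg_left (by positivity) (by positivity) h1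
        have heq : (m + 1 : ℕ) - 1 = m := rfl
        calc ‖κ₁ (m + 3)‖
            = (Λ₁ * Λ₂ / (l₂ (m + 1) * l₁ m) ^ 2) * ‖κ₁ (m + 1)‖ := by
              rw [show (m + 3 : ℕ) = (m + 1) + 2 from rfl, hrec, norm_mul,
                Complex.norm_real, Real.norm_eq_abs, heq, abs_of_nonneg hr0]
          _ ≤ s ^ 2 * (K * s ^ (m + 1)) :=
              mul_le_mul hrs ihm (norm_nonneg _) (by positivity)
          _ = K * s ^ (m + 3) := by ring
  -- distance to the poles
  obtain ⟨δ, hδ_def⟩ : ∃ x : ℝ, x = ρ * c₁ - ρ₁ := ⟨_, rfl⟩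
  have hδ0 : 0 < δ := by
    have hm : ρ * a < ρ * c₁ := mul_lt_mul_of_pos_left hc₁a hρ0
    rw [hδ_def]
    linarith [hρa, hm]
  have hρeq : ‖z₂ - z₁‖ = ρ := by
    rw [hρ, norm_sub_rev]
  have hden : ∀ m, ∀ z ∈ Metric.closedBall z₁ ρ₁, δ ≤ ‖z - z2s m‖ := by
    intro m z hzmem
    have hz1 : ‖z - z₁‖ ≤ ρ₁ := by
      rw [Metric.mem_closedBall, Complex.dist_eq] at hzmem; exact hzmem
    have hlm : c₁ ≤ l₁ m := (hbounds m).1.1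
    have h2 : z2s m - z₁ = ((l₁ m : ℝ) : ℂ) * (z₂ - z₁) := by
      rw [hz2s m]; push_cast; ring
    have h3 : ‖z2s m - z₁‖ = l₁ m * ρ := by
      rw [h2, norm_mul, Complex.norm_real, Real.norm_eq_abs, abs_of_nonneg (le_trans hc₁0.le hlm), hρeq]
    have h4 : ‖z2s m - z₁‖ - ‖z - z₁‖
        ≤ ‖z2s m - z‖ := by
      have h5 := norm_sub_norm_le (z2s m - z₁) (z - z₁)
      simp only [sub_sub_sub_cancel_right] at h5
      exact h5
    have h6 : ‖z - z2s m‖ = ‖z2s m - z‖ :=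
      norm_sub_rev _ _
    rw [h6, hδ_def]
    linarith [h3, h4, hz1, mul_le_mul_of_nonneg_right hlm hρ0.le]
  -- uniform bound on q₁ n for n ≥ 1
  obtain ⟨B, hB_def⟩ : ∃ x : ℝ, x = 1 / δ + 1 / (2 * c₁ * ρ) := ⟨_, rfl⟩
  have hc₁ρ : 0 < 2 * c₁ * ρ := mul_pos (mul_pos two_pos hc₁0) hρ0
  have hB0 : 0 < B := by
    rw [hB_def]
    exact add_pos (one_div_pos.2 hδ0) (one_div_pos.2 hc₁ρ)
  have hqb : ∀ n, 1 ≤ n → ∀ z ∈ Metric.closedBall z₁ ρ₁,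
      ‖q₁ n z‖ ≤ B * (K * s ^ n) := by
    intro n hn z hzmem
    have hl := (hbounds (n - 1)).1.1
    have hlpos : 0 < l₁ (n - 1) := lt_of_lt_of_le hc₁0 hl
    have habs_α : ‖α₁ n‖ = ‖κ₁ n‖ / (2 * l₁ (n - 1) * ρ) := by
      rw [hα₁ n hn, norm_div, norm_neg, norm_mul, norm_mul, Complex.norm_real, Real.norm_eq_abs,
        Complex.norm_two, abs_of_pos hlpos, ← hρ]
    have hκn := hκb n hn
    have hκnn : 0 ≤ ‖κ₁ n‖ := norm_nonneg _
    have hd := hden (n - 1) z hzmem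
    rw [hq₁ n hn z]
    calc ‖κ₁ n / (z - z2s (n - 1)) + α₁ n‖
        ≤ ‖κ₁ n‖ / ‖z - z2s (n - 1)‖ + ‖α₁ n‖ := by
          rw [← norm_div]; exact norm_add_le _ _
      _ ≤ ‖κ₁ n‖ / δ + ‖κ₁ n‖ / (2 * c₁ * ρ) := by
          apply add_le_add
          · exact div_le_div_of_nonneg_left hκnn hδ0 hd
          · rw [habs_α]
            refine div_le_div_of_nonneg_left hκnn hc₁ρ ?_
            linarith [mul_le_mul_of_nonneg_right hl hρ0.le]
      _ = ‖κ₁ n‖ * B := by rw [hB_def]; ring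
      _ ≤ (K * s ^ n) * B := mul_le_mul_of_nonneg_right hκn hB0.le
      _ = B * (K * s ^ n) := mul_comm _ _
  -- assemble with the Weierstrass M-test
  have hsummable : Summable (fun n : ℕ =>
      (if n = 0 then 2 * ρ₁ else 0) + B * K * (1 + s) * (s ^ 2) ^ n) := by
    apply Summable.add
    · apply summable_of_ne_finset_zero (s := ({0} : Finset ℕ))
      intro n hn
      simp only [Finset.mem_singleton] at hn
      simp [hn]
    · have hs2 : s ^ 2 < 1 := pow_lt_one₀ hs0.le hs1 (by norm_num)
      exact (summable_geometric_of_lt_one (by positivity) hs2).mul_left _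
  refine ⟨_, tendstoUniformlyOn_tsum_nat hsummable ?_⟩
  intro n z hzmem
  have htri : ‖q₁ (2 * n) z + starRingEnd ℂ (q₁ (2 * n + 1) z)‖
      ≤ ‖q₁ (2 * n) z‖ + ‖q₁ (2 * n + 1) z‖ := by
    calc ‖q₁ (2 * n) z + starRingEnd ℂ (q₁ (2 * n + 1) z)‖
        ≤ ‖q₁ (2 * n) z‖ + ‖starRingEnd ℂ (q₁ (2 * n + 1) z)‖ := norm_add_le _ _
      _ = ‖q₁ (2 * n) z‖ + ‖q₁ (2 * n + 1) z‖ := by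
          rw [Complex.norm_conj]
  refine le_trans htri ?_
  cases n with
  | zero =>
    have h0 : ‖q₁ 0 z‖ ≤ 2 * ρ₁ := by
      rw [hq₁0 z, norm_mul, Complex.norm_two]
      have hz1 : ‖z - z₁‖ ≤ ρ₁ := by
        rw [Metric.mem_closedBall, Complex.dist_eq] at hzmem; exact hzmem
      linarith
    have h1 : ‖q₁ 1 z‖ ≤ B * (K * s) := by
      have h := hqb 1 (le_refl 1) z hzmem
      rwa [pow_one] at h
    have hBK : 0 ≤ B * K := mul_nonneg hB0.le hK0
    norm_num
    linarith [h0, h1, mul_nonneg hBK hs0.le]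
  | succ n =>
    have h1 := hqb (2 * (n + 1)) (by omega) z hzmem
    have h2 := hqb (2 * (n + 1) + 1) (by omega) z hzmem
    have e1 : s ^ (2 * (n + 1)) = (s ^ 2) ^ (n + 1) := (pow_mul s 2 (n + 1))
    have e2 : s ^ (2 * (n + 1) + 1) = (s ^ 2) ^ (n + 1) * s := by
      rw [pow_succ, e1]
    rw [e1] at h1
    rw [e2] at h2
    rw [if_neg (Nat.succ_ne_zero n)]
    linarith [h1, h2]
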